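/- Let Φ be a t-uniform purified code state with t ≥ 2, let T ⊆ {1,…,n−1} with |T| = t (so qudit n ∉ T, and qudit n is taken as the last coordinate of T^c), and let U be a T-standard-form unitary for Φ. Let ε ∈ ℂ^Q be any unit vector. Define χ ∈ ℂ^{Q^k} ⊗ (ℂ^Q)^{⊗(n−1)} by χ := Q^{−(t−1)/2} Σ_{s ∈ {0,…,Q−1}^k} Σ_{r ∈ {0,…,Q−1}^{n−t−1}} e_s (on R) ⊗ U(e_s ⊗ e_{r_1} ⊗ ⋯ ⊗ e_{r_{n−t−1}} ⊗ ε) (on the qudits in T) ⊗ e_{r_1} ⊗ ⋯ ⊗ e_{r_{n−t−1}} (on the qudits in {1,…,n−1}∖T). Then χ is a unit vector and, for every j ∈ {1,…,n−1}, the reduced density matrix of χ on qudit j equals Q^{−1}·I; in particular the Schmidt rank of χ across the bipartition (qudit j | all other registers) equals Q (Lemma C.2). -/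

import Mathlib

open scoped BigOperators

noncomputable section

/-- Combine an assignment on `A` with an assignment on the complement of `A`
into a full computational-basis string. -/
def mergeOn {n Q : ℕ} (A : Finset (Fin n)) (u : {i // i ∈ A} → Fin Q)
    (v : {i // i ∉ A} → Fin Q) : Fin n → Fin Q :=
  fun i => if h : i ∈ A then u ⟨i, h⟩ else v ⟨i, h⟩

/-- Reduced density matrix of a purified code state `Φ` on the qudits in `A`
(the reference register and the qudits outside `A` are traced out). -/
def rdm {Q k n : ℕ} (Φ : (Fin k → Fin Q) → (Fin n → Fin Q) → ℂ)
    (A : Finset (Fin n)) :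
    Matrix ({i // i ∈ A} → Fin Q) ({i // i ∈ A} → Fin Q) ℂ :=
  Matrix.of fun u v => ∑ s : Fin k → Fin Q, ∑ w : {i // i ∉ A} → Fin Q,
    Φ s (mergeOn A u w) * (starRingEnd ℂ) (Φ s (mergeOn A v w))

/-- `Φ` is `t`-uniform: every set of `t` qudits is maximally mixed. -/
def TUniform {Q k n : ℕ} (t : ℕ)
    (Φ : (Fin k → Fin Q) → (Fin n → Fin Q) → ℂ) : Prop :=
  ∀ A : Finset (Fin n), A.card = t →
    rdm Φ A = ((Q : ℂ) ^ t)⁻¹ •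
      (1 : Matrix ({i // i ∈ A} → Fin Q) ({i // i ∈ A} → Fin Q) ℂ)


/-- The state `χ` of Lemma C.2, in amplitude form: registers are the reference `R`
(`s : Fin k → Fin Q`), the `t` qudits in `T` in increasing order (`a : Fin t → Fin Q`), and
the `n-t-1` qudits in `{1,…,n-1} \ T` in increasing order (`r' : Fin (n-t-1) → Fin Q`).
`χ = Q^{-(t-1)/2} Σ_{s,r'} e_s ⊗ U(e_s ⊗ e_{r'} ⊗ ε)|_T ⊗ e_{r'}`. -/
def chiState (Q t n k : ℕ) (h1 : t = k + (n - t)) (h2 : n - t = n - t - 1 + 1)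
    (U : Matrix (Fin t → Fin Q) (Fin t → Fin Q) ℂ) (ε : Fin Q → ℂ) :
    (Fin k → Fin Q) → (Fin t → Fin Q) → (Fin (n - t - 1) → Fin Q) → ℂ :=
  fun s a r' => (Real.sqrt ((Q : ℝ) ^ (t - 1)) : ℂ)⁻¹ *
    ∑ rl : Fin Q,
      U a (fun i => Fin.append s
            (fun j => Fin.snoc (α := fun _ => Fin Q) r' rl (Fin.cast h2 j))
            (Fin.cast h1 i)) * ε rl

/-- Single-qudit reduced density matrix of a three-register state, for the `p`-th qudit of the
middle register (all other registers are traced out). -/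
def rdmMid {α β : Type*} [Fintype α] [Fintype β] {Q m : ℕ}
    (χ : α → (Fin m → Fin Q) → β → ℂ) (p : Fin m) : Matrix (Fin Q) (Fin Q) ℂ :=
  Matrix.of fun x y => ∑ s : α, ∑ a : Fin m → Fin Q, ∑ b : β,
    (if a p = x then 1 else 0) * χ s a b *
      (starRingEnd ℂ) (χ s (Function.update a p y) b)

/-- Single-qudit reduced density matrix of a three-register state, for the `p`-th qudit of the
last register (all other registers are traced out). -/
def rdmLast {α β : Type*} [Fintype α] [Fintype β] {Q m : ℕ}
    (χ : α → β → (Fin m → Fin Q) → ℂ) (p : Fin m) : Matrix (Fin Q) (Fin Q) ℂ :=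
  Matrix.of fun x y => ∑ s : α, ∑ b : β, ∑ r : Fin m → Fin Q,
    (if r p = x then 1 else 0) * χ s b r *
      (starRingEnd ℂ) (χ s b (Function.update r p y))


/-! ### Auxiliary lemmas -/

section StmtSevenAux

variable {Q : ℕ}

lemma append_cast_inj {k nt t : ℕ} (h1 : t = k + nt) {s s' : Fin k → Fin Q}
    {r r' : Fin nt → Fin Q}
    (h : (fun i => Fin.append s r (Fin.cast h1 i)) = fun i => Fin.append s' r' (Fin.cast h1 i)) :
    s = s' ∧ r = r' := by
  subst h1
  constructor
  · funext i
    have := congrFun h (Fin.cast rfl (Fin.castAdd nt i))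
    simpa using this
  · funext i
    have := congrFun h (Fin.cast rfl (Fin.natAdd k i))
    simpa using this

lemma snoc_cast_inj {nt m : ℕ} (h2 : nt = m + 1) {r r' : Fin m → Fin Q} {rl rl' : Fin Q}
    (h : (fun j => Fin.snoc (α := fun _ => Fin Q) r rl (Fin.cast h2 j))
        = fun j => Fin.snoc (α := fun _ => Fin Q) r' rl' (Fin.cast h2 j)) :
    r = r' ∧ rl = rl' := by
  subst h2
  constructor
  · funext i
    have := congrFun h (Fin.cast rfl i.castSucc)
    simpa using this
  · have := congrFun h (Fin.cast rfl (Fin.last m))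
    simpa using this

lemma sum_append {k nt t : ℕ} (h1 : t = k + nt) (F : (Fin t → Fin Q) → ℂ) :
    ∑ c : Fin t → Fin Q, F c
      = ∑ s : Fin k → Fin Q, ∑ r : Fin nt → Fin Q,
          F (fun i => Fin.append s r (Fin.cast h1 i)) := by
  have hb : Function.Bijective (fun sr : ((Fin k → Fin Q) × (Fin nt → Fin Q)) =>
      (fun i => Fin.append sr.1 sr.2 (Fin.cast h1 i) : Fin t → Fin Q)) := ?_
  · calc ∑ c : Fin t → Fin Q, F c
        = ∑ sr : ((Fin k → Fin Q) × (Fin nt → Fin Q)),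
            F (fun i => Fin.append sr.1 sr.2 (Fin.cast h1 i)) :=
          (Fintype.sum_bijective _ hb _ _ (fun x => rfl)).symm
      _ = _ := Fintype.sum_prod_type _
  subst h1
  rw [Fintype.bijective_iff_injective_and_card]
  constructor
  · intro a b hab
    obtain ⟨hs, hr⟩ := append_cast_inj rfl hab
    exact Prod.ext hs hr
  · simp [Fintype.card_fun, pow_add]

lemma countEval {m : ℕ} (p : Fin m) (x : Fin Q) :
    ∑ r : Fin m → Fin Q, (if r p = x then (1:ℂ) else 0) = (Q:ℂ)^(m-1) := by
  classical
  rw [← (Equiv.funSplitAt p (Fin Q)).symm.sum_comp]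
  rw [Fintype.sum_prod_type]
  have hcard : Fintype.card {j : Fin m // j ≠ p} = m - 1 := by
    simp [Fintype.card_subtype_compl]
  simp only [Equiv.funSplitAt_symm_apply, dif_pos rfl]
  rw [Finset.sum_comm]
  simp [Finset.sum_ite_eq', hcard, Fintype.card_fun]

def splitEquiv {N : ℕ} {A B : Finset (Fin N)} (hAB : A ⊆ B) :
    (({i : Fin N // i ∈ B ∧ i ∉ A} → Fin Q) × ({i : Fin N // i ∉ B} → Fin Q))
      ≃ ({i : Fin N // i ∉ A} → Fin Q) where
  toFun := fun zw => fun i => if h : i.1 ∈ B then zw.1 ⟨i.1, ⟨h, i.2⟩⟩ else zw.2 ⟨i.1, h⟩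
  invFun := fun w' => ⟨fun i => w' ⟨i.1, i.2.2⟩, fun i => w' ⟨i.1, fun hA => i.2 (hAB hA)⟩⟩
  left_inv := by
    rintro ⟨z, w⟩
    refine Prod.ext (funext fun i => ?_) (funext fun i => ?_)
    · exact dif_pos i.2.1
    · exact dif_neg i.2
  right_inv := by
    intro w'
    funext i
    by_cases h : i.1 ∈ B
    · exact dif_pos h
    · exact dif_neg h

lemma splitEquiv_apply {N : ℕ} {A B : Finset (Fin N)} (hAB : A ⊆ B)
    (z : {i : Fin N // i ∈ B ∧ i ∉ A} → Fin Q) (w : {i : Fin N // i ∉ B} → Fin Q)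
    (i : {i : Fin N // i ∉ A}) :
    splitEquiv hAB (z, w) i
      = if h : i.1 ∈ B then z ⟨i.1, ⟨h, i.2⟩⟩ else w ⟨i.1, h⟩ := rfl

lemma traceDown {K N : ℕ} (Φ : (Fin K → Fin Q) → (Fin N → Fin Q) → ℂ)
    {A B : Finset (Fin N)} (hAB : A ⊆ B) (u v : {i // i ∈ A} → Fin Q) :
    rdm Φ A u v = ∑ z : {i : Fin N // i ∈ B ∧ i ∉ A} → Fin Q,
      rdm Φ B (fun i => if h : i.1 ∈ A then u ⟨i.1, h⟩ else z ⟨i.1, ⟨i.2, h⟩⟩)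
               (fun i => if h : i.1 ∈ A then v ⟨i.1, h⟩ else z ⟨i.1, ⟨i.2, h⟩⟩) := by
  classical
  simp only [rdm, Matrix.of_apply]
  conv_rhs => rw [Finset.sum_comm]
  refine Finset.sum_congr rfl fun s _ => ?_
  set e := splitEquiv (Q := Q) hAB with he
  have key : ∀ (uu : {i // i ∈ A} → Fin Q) (z : {i : Fin N // i ∈ B ∧ i ∉ A} → Fin Q)
      (w : {i : Fin N // i ∉ B} → Fin Q),
      mergeOn A uu (e (z, w))
        = mergeOn B (fun i => if h : i.1 ∈ A then uu ⟨i.1, h⟩ else z ⟨i.1, ⟨i.2, h⟩⟩) w := by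
    intro uu z w
    funext i
    by_cases hA : i ∈ A
    · simp only [mergeOn, dif_pos hA, dif_pos (hAB hA)]
    · by_cases hB : i ∈ B
      · simp only [mergeOn, dif_neg hA, he, splitEquiv_apply, dif_pos hB]
      · simp only [mergeOn, dif_neg hA, he, splitEquiv_apply, dif_neg hB]
  calc (∑ w' : {i : Fin N // i ∉ A} → Fin Q,
          Φ s (mergeOn A u w') * (starRingEnd ℂ) (Φ s (mergeOn A v w')))
      = ∑ zw : (({i : Fin N // i ∈ B ∧ i ∉ A} → Fin Q) × ({i : Fin N // i ∉ B} → Fin Q)),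
          Φ s (mergeOn A u (e zw)) * (starRingEnd ℂ) (Φ s (mergeOn A v (e zw))) :=
        (Equiv.sum_comp e _).symm
    _ = _ := by
        rw [Fintype.sum_prod_type _]
        refine Finset.sum_congr rfl fun z _ => Finset.sum_congr rfl fun w _ => ?_
        rw [key u z w, key v z w]

lemma ext_inj {N : ℕ} {A B : Finset (Fin N)} (hAB : A ⊆ B)
    (u v : {i // i ∈ A} → Fin Q) (z : {i : Fin N // i ∈ B ∧ i ∉ A} → Fin Q) :
    ((fun (i : {i // i ∈ B}) => if h : i.1 ∈ A then u ⟨i.1, h⟩ else z ⟨i.1, ⟨i.2, h⟩⟩)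
      = fun i => if h : i.1 ∈ A then v ⟨i.1, h⟩ else z ⟨i.1, ⟨i.2, h⟩⟩) ↔ u = v := by
  constructor
  · intro h
    funext i
    have h2 := congrFun h ⟨i.1, hAB i.2⟩
    simpa only [dif_pos i.2] using h2
  · intro h; rw [h]

lemma two_uniform {K N t : ℕ} (hQ : (Q:ℂ) ≠ 0)
    (Φ : (Fin K → Fin Q) → (Fin N → Fin Q) → ℂ) (hU : TUniform t Φ)
    (ht2 : 2 ≤ t) (htN : t ≤ N) {A : Finset (Fin N)} (hA : A.card = 2)
    (u v : {i // i ∈ A} → Fin Q) :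
    rdm Φ A u v = ((Q:ℂ)^2)⁻¹ * (if u = v then 1 else 0) := by
  classical
  obtain ⟨B, hAB, -, hBcard⟩ := Finset.exists_subsuperset_card_eq (n := t)
    (Finset.subset_univ A) (le_of_eq_of_le hA ht2) (by simpa using htN)
  rw [traceDown Φ hAB u v]
  have hent : ∀ z : {i : Fin N // i ∈ B ∧ i ∉ A} → Fin Q,
      rdm Φ B (fun i => if h : i.1 ∈ A then u ⟨i.1, h⟩ else z ⟨i.1, ⟨i.2, h⟩⟩)
               (fun i => if h : i.1 ∈ A then v ⟨i.1, h⟩ else z ⟨i.1, ⟨i.2, h⟩⟩)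
        = ((Q:ℂ)^t)⁻¹ * (if u = v then 1 else 0) := by
    intro z
    rw [hU B hBcard]
    simp only [Matrix.smul_apply, Matrix.one_apply, smul_eq_mul, mul_ite, mul_one, mul_zero]
    simp only [ext_inj hAB u v z]
  simp only [hent]
  rw [Finset.sum_const, Finset.card_univ]
  have hsub : Fintype.card {i : Fin N // i ∈ B ∧ i ∉ A} = t - 2 := by
    rw [Fintype.card_subtype]
    have heq : Finset.filter (fun i => i ∈ B ∧ i ∉ A) Finset.univ = B \ A := by
      ext i; simp [Finset.mem_sdiff, and_comm]
    rw [heq, Finset.card_sdiff_of_subset hAB, hA, hBcard]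
  rw [Fintype.card_fun, hsub, Fintype.card_fin, nsmul_eq_mul]
  push_cast
  rw [show t = (t - 2) + 2 by omega, pow_add, mul_inv]
  field_simp
  rw [Nat.add_sub_cancel]

lemma sum_colOrth {d : ℕ} (U : Matrix (Fin d → Fin Q) (Fin d → Fin Q) ℂ)
    (hU : U ∈ Matrix.unitaryGroup (Fin d → Fin Q) ℂ) (c c' : Fin d → Fin Q) :
    ∑ a : Fin d → Fin Q, U a c * (starRingEnd ℂ) (U a c')
      = if c = c' then 1 else 0 := by
  have h1 : star U * U = 1 := hU.1
  have h := congrFun (congrFun h1 c) c'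
  rw [Matrix.mul_apply] at h
  simp only [Matrix.star_apply, Matrix.one_apply] at h
  have h2 := congrArg (starRingEnd ℂ) h
  simpa [map_sum, map_mul, Complex.star_def, Complex.conj_conj, apply_ite] using h2

lemma sum_a {d : ℕ} (U : Matrix (Fin d → Fin Q) (Fin d → Fin Q) ℂ)
    (hU : U ∈ Matrix.unitaryGroup (Fin d → Fin Q) ℂ) (ε : Fin Q → ℂ)
    (v w : Fin Q → (Fin d → Fin Q)) :
    ∑ a : Fin d → Fin Q,
      (∑ rl : Fin Q, U a (v rl) * ε rl) * (starRingEnd ℂ) (∑ rl' : Fin Q, U a (w rl') * ε rl')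
    = ∑ rl : Fin Q, ∑ rl' : Fin Q,
        (if v rl = w rl' then 1 else 0) * (ε rl * (starRingEnd ℂ) (ε rl')) := by
  have step : ∀ a : Fin d → Fin Q,
      (∑ rl : Fin Q, U a (v rl) * ε rl) * (starRingEnd ℂ) (∑ rl' : Fin Q, U a (w rl') * ε rl')
      = ∑ rl : Fin Q, ∑ rl' : Fin Q,
          (U a (v rl) * (starRingEnd ℂ) (U a (w rl'))) * (ε rl * (starRingEnd ℂ) (ε rl')) := by
    intro a
    rw [map_sum, Finset.sum_mul_sum]
    refine Finset.sum_congr rfl fun rl _ => Finset.sum_congr rfl fun rl' _ => ?_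
    rw [map_mul]
    ring
  simp only [step]
  rw [Finset.sum_comm]
  refine Finset.sum_congr rfl fun rl _ => ?_
  rw [Finset.sum_comm]
  refine Finset.sum_congr rfl fun rl' _ => ?_
  rw [← Finset.sum_mul, sum_colOrth U hU]

lemma sum_const_fun {m : ℕ} (c : ℂ) : ∑ _x : Fin m → Fin Q, c = (Q:ℂ)^m * c := by
  rw [Finset.sum_const, Finset.card_univ, Fintype.card_fun, nsmul_eq_mul]
  push_cast
  simp

lemma normConst {e : ℕ} :
    ((Real.sqrt ((Q:ℝ)^e) : ℂ))⁻¹ * (starRingEnd ℂ) ((Real.sqrt ((Q:ℝ)^e) : ℂ))⁻¹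
      = ((Q:ℂ)^e)⁻¹ := by
  rw [map_inv₀, Complex.conj_ofReal, ← mul_inv, ← Complex.ofReal_mul,
    Real.mul_self_sqrt (by positivity)]
  push_cast
  rfl

lemma mul_sum2 {α β : Type*} [Fintype α] [Fintype β] (c : ℂ) (F : α → β → ℂ) :
    ∑ a : α, ∑ b : β, c * F a b = c * ∑ a : α, ∑ b : β, F a b := by
  simp only [← Finset.mul_sum]

lemma mul_sum3 {α β γ : Type*} [Fintype α] [Fintype β] [Fintype γ] (c : ℂ) (F : α → β → γ → ℂ) :
    ∑ a : α, ∑ b : β, ∑ g : γ, c * F a b g = c * ∑ a : α, ∑ b : β, ∑ g : γ, F a b g := by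
  simp only [← Finset.mul_sum]

lemma sum_comm3 {α β γ : Type*} [Fintype α] [Fintype β] [Fintype γ] (f : α → β → γ → ℂ) :
    ∑ a : α, ∑ b : β, ∑ c : γ, f a b c = ∑ b : β, ∑ c : γ, ∑ a : α, f a b c := by
  rw [Finset.sum_comm]
  exact Finset.sum_congr rfl fun b _ => Finset.sum_comm

lemma delta_eps (ε : Fin Q → ℂ)
    (hε : ∑ m : Fin Q, ε m * (starRingEnd ℂ) (ε m) = 1) :
    ∑ rl : Fin Q, ∑ rl' : Fin Q,
      (if rl = rl' then (1:ℂ) else 0) * (ε rl * (starRingEnd ℂ) (ε rl')) = 1 := by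
  have key : ∀ rl : Fin Q, ∑ rl' : Fin Q,
      (if rl = rl' then (1:ℂ) else 0) * (ε rl * (starRingEnd ℂ) (ε rl'))
        = ε rl * (starRingEnd ℂ) (ε rl) := by
    intro rl
    rw [Finset.sum_eq_single rl]
    · simp
    · intro b _ hb
      rw [if_neg (fun h => hb h.symm), zero_mul]
    · intro h; exact absurd (Finset.mem_univ rl) h
  simp only [key]
  exact hε

lemma rank_helper {M : Matrix (Fin Q) (Fin Q) ℂ} (hQ : (Q:ℂ) ≠ 0)
    (h : M = ((Q : ℂ))⁻¹ • (1 : Matrix (Fin Q) (Fin Q) ℂ)) : M.rank = Q := by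
  have hu : IsUnit M := by
    rw [h]
    exact ⟨⟨((Q : ℂ))⁻¹ • (1 : Matrix (Fin Q) (Fin Q) ℂ),
      (Q : ℂ) • (1 : Matrix (Fin Q) (Fin Q) ℂ),
      by rw [Matrix.smul_mul, Matrix.one_mul, smul_smul, inv_mul_cancel₀ hQ, one_smul],
      by rw [Matrix.smul_mul, Matrix.one_mul, smul_smul, mul_inv_cancel₀ hQ, one_smul]⟩, rfl⟩
  rw [Matrix.rank_of_isUnit M hu, Fintype.card_fin]


lemma indicator_split {Q t : ℕ} (p : Fin t) (x : Fin Q) (H : (Fin t → Fin Q) → ℂ) :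
    ∑ b : Fin t → Fin Q, (if b p = x then (1:ℂ) else 0) * H b
      = ∑ b' : {i : Fin t // i ≠ p} → Fin Q,
          H (fun i => if h : i = p then x else b' ⟨i, h⟩) := by
  classical
  rw [← (Equiv.funSplitAt p (Fin Q)).symm.sum_comp]
  rw [Fintype.sum_prod_type]
  have hv : ∀ (ξ : Fin Q) (b' : {i : Fin t // i ≠ p} → Fin Q),
      (Equiv.funSplitAt p (Fin Q)).symm (ξ, b') = fun i => if h : i = p then ξ else b' ⟨i, h⟩ := by
    intro ξ b'; funext i
    by_cases h : i = p
    · subst h; simp [Equiv.funSplitAt_symm_apply]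
    · simp [Equiv.funSplitAt_symm_apply, h]
  simp only [hv]
  simp only [dif_pos trivial]
  rw [Finset.sum_comm]
  refine Finset.sum_congr rfl fun b' _ => ?_
  rw [Finset.sum_eq_single x]
  · rw [if_pos rfl, one_mul]
  · intro ξ _ hξ; rw [if_neg hξ, zero_mul]
  · intro h; exact absurd (Finset.mem_univ x) h

lemma reindex_aux {Q t m N : ℕ} (A : Finset (Fin N)) (p : Fin t)
    (eT : Fin t → Fin N) (eC : Fin m → Fin N)
    (hT : ∀ i : Fin t, i ≠ p → eT i ∉ A) (hC : ∀ q : Fin m, eC q ∉ A)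
    (hbij : Function.Bijective (fun z : ({i : Fin t // i ≠ p} ⊕ Fin m) =>
      (Sum.elim (fun i : {i : Fin t // i ≠ p} => (⟨eT i.1, hT i.1 i.2⟩ : {i : Fin N // i ∉ A}))
        (fun q => ⟨eC q, hC q⟩) z)))
    (x : Fin Q) (G : (Fin t → Fin Q) → (Fin m → Fin Q) → ℂ) :
    ∑ b : Fin t → Fin Q, ∑ r : Fin m → Fin Q, (if b p = x then (1:ℂ) else 0) * G b r
      = ∑ w : {i : Fin N // i ∉ A} → Fin Q,
          G (fun i => if h : i = p then x else w ⟨eT i, hT i h⟩) (fun q => w ⟨eC q, hC q⟩) := by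
  classical
  set e1 : ({i : Fin t // i ≠ p} ⊕ Fin m) ≃ {i : Fin N // i ∉ A} :=
    Equiv.ofBijective _ hbij with he1
  have hsymm_inl : ∀ (i : Fin t) (h : i ≠ p), e1.symm ⟨eT i, hT i h⟩ = Sum.inl ⟨i, h⟩ := by
    intro i h
    rw [show (⟨eT i, hT i h⟩ : {i : Fin N // i ∉ A}) = e1 (Sum.inl ⟨i, h⟩) from rfl]
    exact e1.symm_apply_apply _
  have hsymm_inr : ∀ q : Fin m, e1.symm ⟨eC q, hC q⟩ = Sum.inr q := by
    intro q
    rw [show (⟨eC q, hC q⟩ : {i : Fin N // i ∉ A}) = e1 (Sum.inr q) from rfl]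
    exact e1.symm_apply_apply _
  set F2 : (({i : Fin t // i ≠ p} ⊕ Fin m) → Fin Q) → ℂ :=
    fun g => G (fun i => if h : i = p then x else g (Sum.inl ⟨i, h⟩)) (fun q => g (Sum.inr q))
    with hF2
  set e2 := Equiv.sumArrowEquivProdArrow {i : Fin t // i ≠ p} (Fin m) (Fin Q) with he2
  have l2 : ∀ g : ({i : Fin t // i ≠ p} ⊕ Fin m) → Fin Q,
      G (fun i => if h : i = p then x else (g (e1.symm ⟨eT i, hT i h⟩)))
        (fun q => g (e1.symm ⟨eC q, hC q⟩)) = F2 g := by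
    intro g
    rw [hF2]
    congr 1
    · funext i; by_cases h : i = p
      · rw [dif_pos h, dif_pos h]
      · rw [dif_neg h, dif_neg h, hsymm_inl i h]
    · funext q; rw [hsymm_inr q]
  calc ∑ b : Fin t → Fin Q, ∑ r : Fin m → Fin Q, (if b p = x then (1:ℂ) else 0) * G b r
      = ∑ b : Fin t → Fin Q, (if b p = x then (1:ℂ) else 0) * ∑ r, G b r :=
        Finset.sum_congr rfl fun b _ => (Finset.mul_sum _ _ _).symm
    _ = ∑ b' : {i : Fin t // i ≠ p} → Fin Q,
          ∑ r : Fin m → Fin Q, G (fun i => if h : i = p then x else b' ⟨i, h⟩) r :=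
        indicator_split p x _
    _ = ∑ z : (({i : Fin t // i ≠ p} → Fin Q) × (Fin m → Fin Q)), F2 (e2.symm z) :=
        (Fintype.sum_prod_type (f := fun z => F2 (e2.symm z))).symm
    _ = ∑ g : ({i : Fin t // i ≠ p} ⊕ Fin m) → Fin Q, F2 g := e2.symm.sum_comp F2
    _ = ∑ g : ({i : Fin t // i ≠ p} ⊕ Fin m) → Fin Q,
          G (fun i => if h : i = p then x else (g (e1.symm ⟨eT i, hT i h⟩)))
            (fun q => g (e1.symm ⟨eC q, hC q⟩)) :=
        (Finset.sum_congr rfl fun g _ => l2 g).symm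
    _ = ∑ w : {i : Fin N // i ∉ A} → Fin Q,
          G (fun i => if h : i = p then x else w ⟨eT i, hT i h⟩) (fun q => w ⟨eC q, hC q⟩) :=
        Equiv.sum_comp (Equiv.arrowCongr e1 (Equiv.refl (Fin Q)))
          (fun w => G (fun i => if h : i = p then x else w ⟨eT i, hT i h⟩)
            (fun q => w ⟨eC q, hC q⟩))

end StmtSevenAux

set_option maxHeartbeats 2000000 in
/-- Lemma C.2.  With `T ⊆ {1,…,n-1}`, `|T| = t`, `U` a `T`-standard-form
unitary for the `t`-uniform state `Φ`, and `ε` a unit vector, the state `χ` is a unit vector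
whose reduced density matrix on every single qudit `j ∈ {1,…,n-1}` (i.e. on every qudit of
`T` and every qudit of `{1,…,n-1} \ T`) equals `Q⁻¹ · I`; in particular the Schmidt rank of
`χ` across (qudit `j` | all other registers) equals `Q`. -/
theorem stmt_7 (Q t n : ℕ) (hQ : 2 ≤ Q) (ht : 2 ≤ t) (htn : t < n) (hn : n ≤ 2 * t)
    (k : ℕ) (hk : k = 2 * t - n)
    (Φ : (Fin k → Fin Q) → (Fin n → Fin Q) → ℂ)
    (hnorm : ∑ s : Fin k → Fin Q, ∑ w : Fin n → Fin Q,
      Φ s w * (starRingEnd ℂ) (Φ s w) = 1)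
    (huniform : TUniform t Φ)
    (T : Finset (Fin n)) (hT : T.card = t) (hTc : Tᶜ.card = n - t)
    (hTsub : ∀ i ∈ T, (i : ℕ) < n - 1)
    (U : Matrix (Fin t → Fin Q) (Fin t → Fin Q) ℂ)
    (hUuni : U ∈ Matrix.unitaryGroup (Fin t → Fin Q) ℂ)
    (hUstd : ∀ (s : Fin k → Fin Q) (w : Fin n → Fin Q),
      Φ s w = (Real.sqrt ((Q : ℝ) ^ t) : ℂ)⁻¹ *
        U (fun i => w (T.orderEmbOfFin hT i))
          (fun i => Fin.append s (fun j => w (Tᶜ.orderEmbOfFin hTc j))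
            (Fin.cast (by omega : t = k + (n - t)) i)))
    (ε : Fin Q → ℂ) (hε : ∑ m : Fin Q, ε m * (starRingEnd ℂ) (ε m) = 1) :
    -- χ is a unit vector
    (∑ s : Fin k → Fin Q, ∑ a : Fin t → Fin Q, ∑ r' : Fin (n - t - 1) → Fin Q,
        chiState Q t n k (by omega) (by omega) U ε s a r' *
          (starRingEnd ℂ) (chiState Q t n k (by omega) (by omega) U ε s a r') = 1) ∧
    -- every qudit of T is maximally mixed, and has Schmidt rank Q against the rest
    (∀ p : Fin t,
      rdmMid (chiState Q t n k (by omega) (by omega) U ε) p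
          = ((Q : ℂ))⁻¹ • (1 : Matrix (Fin Q) (Fin Q) ℂ) ∧
        (rdmMid (chiState Q t n k (by omega) (by omega) U ε) p).rank = Q) ∧
    -- every qudit of {1,…,n-1} \ T is maximally mixed, with Schmidt rank Q against the rest
    (∀ p : Fin (n - t - 1),
      rdmLast (fun s (a : Fin t → Fin Q) r' =>
            chiState Q t n k (by omega) (by omega) U ε s a r') p
          = ((Q : ℂ))⁻¹ • (1 : Matrix (Fin Q) (Fin Q) ℂ) ∧
        (rdmLast (fun s (a : Fin t → Fin Q) r' =>
            chiState Q t n k (by omega) (by omega) U ε s a r') p).rank = Q) := by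
  classical
  have hQ0 : (Q:ℂ) ≠ 0 := Nat.cast_ne_zero.mpr (by omega)
  have h1 : t = k + (n - t) := by omega
  have h2 : n - t = n - t - 1 + 1 := by omega
  set cc : (Fin k → Fin Q) → (Fin (n - t - 1) → Fin Q) → Fin Q → (Fin t → Fin Q) :=
    fun s r rl => fun i => Fin.append s
      (fun j => Fin.snoc (α := fun _ => Fin Q) r rl (Fin.cast h2 j)) (Fin.cast h1 i) with hccdef
  have hccInj : ∀ {s s' : Fin k → Fin Q} {r r' : Fin (n - t - 1) → Fin Q} {rl rl' : Fin Q},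
      cc s r rl = cc s' r' rl' → s = s' ∧ r = r' ∧ rl = rl' := by
    intro s s' r r' rl rl' h
    obtain ⟨hs, hr⟩ := append_cast_inj h1 h
    obtain ⟨hr', hrl⟩ := snoc_cast_inj h2 hr
    exact ⟨hs, hr', hrl⟩
  have hchi : ∀ (s : Fin k → Fin Q) (a : Fin t → Fin Q) (r : Fin (n - t - 1) → Fin Q),
      chiState Q t n k h1 h2 U ε s a r
        = ((Real.sqrt ((Q : ℝ) ^ (t - 1)) : ℂ))⁻¹ * ∑ rl : Fin Q, U a (cc s r rl) * ε rl :=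
    fun _ _ _ => rfl
  have hprod : ∀ (s : Fin k → Fin Q) (a : Fin t → Fin Q) (r : Fin (n - t - 1) → Fin Q)
      (s' : Fin k → Fin Q) (a' : Fin t → Fin Q) (r' : Fin (n - t - 1) → Fin Q),
      chiState Q t n k h1 h2 U ε s a r * (starRingEnd ℂ) (chiState Q t n k h1 h2 U ε s' a' r')
        = ((Q:ℂ)^(t-1))⁻¹ * ((∑ rl : Fin Q, U a (cc s r rl) * ε rl)
            * (starRingEnd ℂ) (∑ rl' : Fin Q, U a' (cc s' r' rl') * ε rl')) := by
    intro s a r s' a' r'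
    rw [hchi, hchi, map_mul, mul_mul_mul_comm, normConst]
  -- ### Part 1 : χ is a unit vector
  have part1 : ∑ s : Fin k → Fin Q, ∑ a : Fin t → Fin Q, ∑ r : Fin (n - t - 1) → Fin Q,
      chiState Q t n k h1 h2 U ε s a r
        * (starRingEnd ℂ) (chiState Q t n k h1 h2 U ε s a r) = 1 := by
    calc ∑ s : Fin k → Fin Q, ∑ a : Fin t → Fin Q, ∑ r : Fin (n - t - 1) → Fin Q,
          chiState Q t n k h1 h2 U ε s a r
            * (starRingEnd ℂ) (chiState Q t n k h1 h2 U ε s a r)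
        = ∑ s : Fin k → Fin Q, ∑ r : Fin (n - t - 1) → Fin Q, ∑ a : Fin t → Fin Q,
            chiState Q t n k h1 h2 U ε s a r
              * (starRingEnd ℂ) (chiState Q t n k h1 h2 U ε s a r) :=
          Finset.sum_congr rfl fun s _ => Finset.sum_comm
      _ = ∑ _s : Fin k → Fin Q, ∑ _r : Fin (n - t - 1) → Fin Q, ((Q:ℂ)^(t-1))⁻¹ := by
          refine Finset.sum_congr rfl fun s _ => Finset.sum_congr rfl fun r _ => ?_
          calc ∑ a : Fin t → Fin Q,
                chiState Q t n k h1 h2 U ε s a r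
                  * (starRingEnd ℂ) (chiState Q t n k h1 h2 U ε s a r)
              = ((Q:ℂ)^(t-1))⁻¹ * ∑ a : Fin t → Fin Q,
                  (∑ rl : Fin Q, U a (cc s r rl) * ε rl)
                    * (starRingEnd ℂ) (∑ rl' : Fin Q, U a (cc s r rl') * ε rl') := by
                rw [Finset.mul_sum]
                exact Finset.sum_congr rfl fun a _ => hprod s a r s a r
            _ = ((Q:ℂ)^(t-1))⁻¹ * ∑ rl : Fin Q, ∑ rl' : Fin Q,
                  (if cc s r rl = cc s r rl' then (1:ℂ) else 0)
                    * (ε rl * (starRingEnd ℂ) (ε rl')) := by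
                rw [sum_a U hUuni ε (fun rl => cc s r rl) (fun rl' => cc s r rl')]
            _ = ((Q:ℂ)^(t-1))⁻¹ * ∑ rl : Fin Q, ∑ rl' : Fin Q,
                  (if rl = rl' then (1:ℂ) else 0) * (ε rl * (starRingEnd ℂ) (ε rl')) := by
                congr 1
                refine Finset.sum_congr rfl fun rl _ => Finset.sum_congr rfl fun rl' _ => ?_
                congr 1
                by_cases hrr : rl = rl'
                · subst hrr; simp
                · rw [if_neg (fun hc => hrr (hccInj hc).2.2), if_neg hrr]
            _ = ((Q:ℂ)^(t-1))⁻¹ := by rw [delta_eps ε hε, mul_one]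
      _ = 1 := by
          rw [sum_const_fun, sum_const_fun, ← mul_assoc, ← pow_add,
            show k + (n - t - 1) = t - 1 by omega]
          exact mul_inv_cancel₀ (pow_ne_zero _ hQ0)
  -- ### KeyS : the crucial identity coming from 2-uniformity
  have KeyS : ∀ (p : Fin t) (x y rl rl' : Fin Q),
      (∑ s : Fin k → Fin Q, ∑ b : Fin t → Fin Q, ∑ r : Fin (n - t - 1) → Fin Q,
        (if b p = x then (1:ℂ) else 0) *
          (U b (cc s r rl) * (starRingEnd ℂ) (U (Function.update b p y) (cc s r rl'))))
      = (Q:ℂ)^(t-2) * ((if x = y then (1:ℂ) else 0) * (if rl = rl' then 1 else 0)) := by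
    intro p x y rl rl'
    set jj := T.orderEmbOfFin hT p with hjj
    have hjT : jj ∈ T := by rw [hjj]; exact Finset.orderEmbOfFin_mem T hT p
    have hm0lt : n - 1 < n := by omega
    set m0 : Fin n := ⟨n - 1, hm0lt⟩ with hm0def
    have hm0T : m0 ∉ T := fun hmem => absurd (hTsub m0 hmem) (by rw [hm0def]; exact lt_irrefl _)
    have hjm : jj ≠ m0 := fun h => hm0T (h ▸ hjT)
    set A : Finset (Fin n) := {jj, m0} with hAdef
    have hjA : jj ∈ A := by rw [hAdef]; exact Finset.mem_insert_self _ _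
    have hmA : m0 ∈ A := by rw [hAdef]; exact Finset.mem_insert_of_mem (Finset.mem_singleton_self _)
    have hA2 : A.card = 2 := by
      rw [hAdef, Finset.card_insert_of_notMem (by simp [hjm]), Finset.card_singleton]
    have hmemA : ∀ i : Fin n, i ∈ A ↔ i = jj ∨ i = m0 := by
      intro i; rw [hAdef]; simp
    have hpos : 0 < n - t := by omega
    set L : Fin (n - t) := ⟨n - t - 1, by omega⟩ with hLdef
    have hL : Tᶜ.orderEmbOfFin hTc L = m0 := by
      have hlast := Finset.orderEmbOfFin_last (s := Tᶜ) hTc hpos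
      have hmax : Tᶜ.max' (Finset.card_pos.mp (hTc.symm ▸ hpos)) = m0 := by
        refine le_antisymm (Finset.max'_le _ _ _ ?_) (Finset.le_max' _ _ (Finset.mem_compl.mpr hm0T))
        intro yy _
        have h5 : (yy : ℕ) < n := yy.2
        rw [Fin.le_def, hm0def]
        show (yy : ℕ) ≤ n - 1
        omega
      rw [hmax] at hlast
      rw [hLdef]
      exact hlast
    have hTembA : ∀ i : Fin t, i ≠ p → T.orderEmbOfFin hT i ∉ A := by
      intro i hip hmem
      rcases (hmemA _).mp hmem with h | h
      · rw [hjj] at h; exact hip ((T.orderEmbOfFin hT).injective h)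
      · exact hm0T (h ▸ Finset.orderEmbOfFin_mem T hT i)
    have hcastne : ∀ q : Fin (n - t - 1), Fin.cast h2.symm q.castSucc ≠ L := by
      intro q hq
      have hv := congrArg Fin.val hq
      simp only [Fin.coe_cast, Fin.coe_castSucc, hLdef] at hv
      have := q.2
      omega
    have hTcembA : ∀ q : Fin (n - t), q ≠ L → Tᶜ.orderEmbOfFin hTc q ∉ A := by
      intro q hq hmem
      rcases (hmemA _).mp hmem with h | h
      · have hmem2 := Finset.orderEmbOfFin_mem Tᶜ hTc q
        rw [h] at hmem2
        exact (Finset.mem_compl.mp hmem2) hjT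
      · exact hq ((Tᶜ.orderEmbOfFin hTc).injective (h.trans hL.symm))
    have hC' : ∀ q : Fin (n - t - 1), Tᶜ.orderEmbOfFin hTc (Fin.cast h2.symm q.castSucc) ∉ A :=
      fun q => hTcembA _ (hcastne q)
    have hbij : Function.Bijective (fun z : ({i : Fin t // i ≠ p} ⊕ Fin (n - t - 1)) =>
        (Sum.elim (fun i : {i : Fin t // i ≠ p} =>
            (⟨T.orderEmbOfFin hT i.1, hTembA i.1 i.2⟩ : {i : Fin n // i ∉ A}))
          (fun q => ⟨Tᶜ.orderEmbOfFin hTc (Fin.cast h2.symm q.castSucc), hC' q⟩) z)) := by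
      rw [Fintype.bijective_iff_injective_and_card]
      constructor
      · rintro (⟨i, hi⟩ | q) (⟨i', hi'⟩ | q') hz <;>
          simp only [Sum.elim_inl, Sum.elim_inr, Subtype.mk.injEq] at hz
        · exact congrArg Sum.inl (Subtype.ext ((T.orderEmbOfFin hT).injective hz))
        · have hmem2 := Finset.orderEmbOfFin_mem T hT i
          rw [hz] at hmem2
          exact absurd hmem2 (Finset.mem_compl.mp (Finset.orderEmbOfFin_mem Tᶜ hTc _))
        · have hmem2 := Finset.orderEmbOfFin_mem T hT i'
          rw [← hz] at hmem2
          exact absurd hmem2 (Finset.mem_compl.mp (Finset.orderEmbOfFin_mem Tᶜ hTc _))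
        · have h5 := (Tᶜ.orderEmbOfFin hTc).injective hz
          have h6 := congrArg Fin.val h5
          simp only [Fin.coe_cast, Fin.coe_castSucc] at h6
          exact congrArg Sum.inr (Fin.ext h6)
      · rw [Fintype.card_sum, Fintype.card_fin]
        have c1 : Fintype.card {i : Fin t // i ≠ p} = t - 1 := by
          rw [Fintype.card_subtype]
          have heq : Finset.filter (fun i => i ≠ p) Finset.univ = Finset.univ.erase p := by
            ext i; simp [Finset.mem_erase, and_comm]
          rw [heq, Finset.card_erase_of_mem (Finset.mem_univ p), Finset.card_univ,
            Fintype.card_fin]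
        have c2 : Fintype.card {i : Fin n // i ∉ A} = n - 2 := by
          rw [Fintype.card_subtype]
          have heq : Finset.filter (fun i => i ∉ A) Finset.univ = Aᶜ := by
            ext i; simp
          rw [heq, Finset.card_compl, hA2, Fintype.card_fin]
        rw [c1, c2]
        omega
    have C1 : ∀ (ξ ρ : Fin Q) (w : {i : Fin n // i ∉ A} → Fin Q),
        (fun i => mergeOn A (fun i' : {i' // i' ∈ A} => if i'.1 = jj then ξ else ρ) w
            (T.orderEmbOfFin hT i))
          = fun i => if h : i = p then ξ else w ⟨T.orderEmbOfFin hT i, hTembA i h⟩ := by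
      intro ξ ρ w; funext i
      by_cases hip : i = p
      · subst hip
        rw [dif_pos rfl, ← hjj]
        simp [mergeOn, hjA]
      · rw [dif_neg hip]
        have hni := hTembA i hip
        simp [mergeOn, hni]
    have C2 : ∀ (ξ ρ : Fin Q) (w : {i : Fin n // i ∉ A} → Fin Q),
        (fun q : Fin (n - t) => mergeOn A
            (fun i' : {i' // i' ∈ A} => if i'.1 = jj then ξ else ρ) w (Tᶜ.orderEmbOfFin hTc q))
          = fun q => Fin.snoc (α := fun _ => Fin Q)
              (fun q' : Fin (n - t - 1) =>
                w ⟨Tᶜ.orderEmbOfFin hTc (Fin.cast h2.symm q'.castSucc), hC' q'⟩)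
              ρ (Fin.cast h2 q) := by
      intro ξ ρ w; funext q
      by_cases hq : q = L
      · rw [hq, hL]
        have e1 : Fin.cast h2 L = Fin.last (n - t - 1) := by rw [hLdef]; exact Fin.ext rfl
        rw [e1, Fin.snoc_last]
        have hne : (m0 : Fin n) ≠ jj := Ne.symm hjm
        simp [mergeOn, hmA, hne]
      · have hlt : (q : ℕ) < n - t - 1 := by
          have hv : (q:ℕ) ≠ n - t - 1 := fun hc => hq (by rw [hLdef]; exact Fin.ext hc)
          have := q.2
          omega
        have e2 : Fin.cast h2 q = Fin.castSucc ⟨q.1, hlt⟩ := Fin.ext rfl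
        have hnm := hTcembA q hq
        rw [e2, Fin.snoc_castSucc]
        have e3 : Fin.cast h2.symm (Fin.castSucc (⟨q.1, hlt⟩ : Fin (n - t - 1))) = q :=
          Fin.ext rfl
        simp only [mergeOn, dif_neg hnm]
        exact congrArg w (Subtype.ext (congrArg (fun z => Tᶜ.orderEmbOfFin hTc z) e3).symm)
    have C1b : ∀ w : {i : Fin n // i ∉ A} → Fin Q,
        (fun i => if h : i = p then y else w ⟨T.orderEmbOfFin hT i, hTembA i h⟩)
          = Function.update
              (fun i => if h : i = p then x else w ⟨T.orderEmbOfFin hT i, hTembA i h⟩) p y := by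
      intro w; funext i
      by_cases hip : i = p
      · subst hip; rw [dif_pos rfl, Function.update_self]
      · rw [dif_neg hip, Function.update_of_ne hip, dif_neg hip]
    have hencInj : ((fun i : {i' // i' ∈ A} => if i.1 = jj then x else rl)
        = fun i : {i' // i' ∈ A} => if i.1 = jj then y else rl') ↔ (x = y ∧ rl = rl') := by
      constructor
      · intro h
        constructor
        · have hc := congrFun h ⟨jj, hjA⟩
          simpa using hc
        · have hc := congrFun h ⟨m0, hmA⟩
          simpa [Ne.symm hjm] using hc
      · rintro ⟨rfl, rfl⟩; rfl
    have hrdm := two_uniform hQ0 Φ huniform ht htn.le hA2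
        (fun i : {i' // i' ∈ A} => if i.1 = jj then x else rl)
        (fun i : {i' // i' ∈ A} => if i.1 = jj then y else rl')
    have hexpand : rdm Φ A (fun i : {i' // i' ∈ A} => if i.1 = jj then x else rl)
        (fun i : {i' // i' ∈ A} => if i.1 = jj then y else rl')
        = ((Q:ℂ)^t)⁻¹ * ∑ s : Fin k → Fin Q, ∑ b : Fin t → Fin Q, ∑ r : Fin (n - t - 1) → Fin Q,
            (if b p = x then (1:ℂ) else 0) *
              (U b (cc s r rl) * (starRingEnd ℂ) (U (Function.update b p y) (cc s r rl'))) := by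
      show (∑ s : Fin k → Fin Q, ∑ w : {i : Fin n // i ∉ A} → Fin Q,
          Φ s (mergeOn A (fun i : {i' // i' ∈ A} => if i.1 = jj then x else rl) w)
            * (starRingEnd ℂ)
                (Φ s (mergeOn A (fun i : {i' // i' ∈ A} => if i.1 = jj then y else rl') w))) = _
      simp only [hUstd]
      simp only [C1, C2, C1b]
      have hsplitc : ∀ z z' : ℂ,
          (((Real.sqrt ((Q:ℝ)^t) : ℂ))⁻¹ * z)
              * (starRingEnd ℂ) (((Real.sqrt ((Q:ℝ)^t) : ℂ))⁻¹ * z')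
            = ((Q:ℂ)^t)⁻¹ * (z * (starRingEnd ℂ) z') := by
        intro z z'
        rw [map_mul, mul_mul_mul_comm, normConst]
      simp only [hsplitc]
      rw [mul_sum2]
      congr 1
      refine Finset.sum_congr rfl fun s _ => ?_
      exact (reindex_aux A p _ _ hTembA hC' hbij x
        (fun b r => U b (cc s r rl)
          * (starRingEnd ℂ) (U (Function.update b p y) (cc s r rl')))).symm
    have hsplitif : (if (x = y ∧ rl = rl') then (1:ℂ) else 0)
        = (if x = y then (1:ℂ) else 0) * (if rl = rl' then 1 else 0) := by
      by_cases hxy : x = y <;> by_cases hrr : rl = rl' <;> simp [hxy, hrr]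
    have hcomb := hexpand.symm.trans hrdm
    simp only [hencInj] at hcomb
    rw [hsplitif] at hcomb
    have hQt : (Q:ℂ)^t ≠ 0 := pow_ne_zero _ hQ0
    calc (∑ s : Fin k → Fin Q, ∑ b : Fin t → Fin Q, ∑ r : Fin (n - t - 1) → Fin Q,
          (if b p = x then (1:ℂ) else 0) *
            (U b (cc s r rl) * (starRingEnd ℂ) (U (Function.update b p y) (cc s r rl'))))
        = ((Q:ℂ)^t) * (((Q:ℂ)^t)⁻¹
            * ∑ s : Fin k → Fin Q, ∑ b : Fin t → Fin Q, ∑ r : Fin (n - t - 1) → Fin Q,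
              (if b p = x then (1:ℂ) else 0) *
                (U b (cc s r rl)
                  * (starRingEnd ℂ) (U (Function.update b p y) (cc s r rl')))) := by
          rw [← mul_assoc, mul_inv_cancel₀ hQt, one_mul]
      _ = ((Q:ℂ)^t) * (((Q:ℂ)^2)⁻¹
            * ((if x = y then (1:ℂ) else 0) * (if rl = rl' then 1 else 0))) := by
          rw [hcomb]
      _ = (Q:ℂ)^(t-2) * ((if x = y then (1:ℂ) else 0) * (if rl = rl' then 1 else 0)) := by
          rw [show (Q:ℂ)^t = (Q:ℂ)^(t-2) * (Q:ℂ)^2 from by rw [← pow_add]; congr 1; omega]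
          rw [mul_assoc, ← mul_assoc ((Q:ℂ)^2), mul_inv_cancel₀ (pow_ne_zero _ hQ0), one_mul]
  -- ### Part 2 : single qudits of T are maximally mixed
  have partMid : ∀ p : Fin t, rdmMid (chiState Q t n k h1 h2 U ε) p
      = ((Q:ℂ))⁻¹ • (1 : Matrix (Fin Q) (Fin Q) ℂ) := by
    intro p
    ext x y
    simp only [rdmMid, Matrix.of_apply, Matrix.smul_apply, Matrix.one_apply, smul_eq_mul]
    have hpt : ∀ (s : Fin k → Fin Q) (b : Fin t → Fin Q) (r : Fin (n - t - 1) → Fin Q),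
        (if b p = x then (1:ℂ) else 0) * chiState Q t n k h1 h2 U ε s b r
            * (starRingEnd ℂ) (chiState Q t n k h1 h2 U ε s (Function.update b p y) r)
          = ((Q:ℂ)^(t-1))⁻¹ * ∑ rl : Fin Q, ∑ rl' : Fin Q,
              (ε rl * (starRingEnd ℂ) (ε rl')) * ((if b p = x then (1:ℂ) else 0) *
                (U b (cc s r rl)
                  * (starRingEnd ℂ) (U (Function.update b p y) (cc s r rl')))) := by
      intro s b r
      rw [mul_assoc, hprod s b r s (Function.update b p y) r, map_sum, Finset.sum_mul_sum]
      simp only [Finset.mul_sum]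
      refine Finset.sum_congr rfl fun rl _ => Finset.sum_congr rfl fun rl' _ => ?_
      rw [map_mul]
      ring
    calc (∑ s : Fin k → Fin Q, ∑ b : Fin t → Fin Q, ∑ r : Fin (n - t - 1) → Fin Q,
          (if b p = x then (1:ℂ) else 0) * chiState Q t n k h1 h2 U ε s b r
            * (starRingEnd ℂ) (chiState Q t n k h1 h2 U ε s (Function.update b p y) r))
        = ((Q:ℂ)^(t-1))⁻¹ * ∑ s : Fin k → Fin Q, ∑ b : Fin t → Fin Q,
            ∑ r : Fin (n - t - 1) → Fin Q, ∑ rl : Fin Q, ∑ rl' : Fin Q,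
              (ε rl * (starRingEnd ℂ) (ε rl')) * ((if b p = x then (1:ℂ) else 0) *
                (U b (cc s r rl)
                  * (starRingEnd ℂ) (U (Function.update b p y) (cc s r rl')))) := by
          simp only [hpt, ← Finset.mul_sum]
      _ = ((Q:ℂ)^(t-1))⁻¹ * ∑ rl : Fin Q, ∑ rl' : Fin Q, ∑ s : Fin k → Fin Q,
            ∑ b : Fin t → Fin Q, ∑ r : Fin (n - t - 1) → Fin Q,
              (ε rl * (starRingEnd ℂ) (ε rl')) * ((if b p = x then (1:ℂ) else 0) *
                (U b (cc s r rl)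
                  * (starRingEnd ℂ) (U (Function.update b p y) (cc s r rl')))) := by
          congr 1
          calc ∑ s : Fin k → Fin Q, ∑ b : Fin t → Fin Q, ∑ r : Fin (n - t - 1) → Fin Q,
                ∑ rl : Fin Q, ∑ rl' : Fin Q,
                (ε rl * (starRingEnd ℂ) (ε rl')) * ((if b p = x then (1:ℂ) else 0) *
                  (U b (cc s r rl)
                    * (starRingEnd ℂ) (U (Function.update b p y) (cc s r rl'))))
              = ∑ s : Fin k → Fin Q, ∑ b : Fin t → Fin Q, ∑ rl : Fin Q, ∑ rl' : Fin Q,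
                  ∑ r : Fin (n - t - 1) → Fin Q,
                  (ε rl * (starRingEnd ℂ) (ε rl')) * ((if b p = x then (1:ℂ) else 0) *
                    (U b (cc s r rl)
                      * (starRingEnd ℂ) (U (Function.update b p y) (cc s r rl')))) :=
                Finset.sum_congr rfl fun s _ => Finset.sum_congr rfl fun b _ => sum_comm3 _
            _ = ∑ s : Fin k → Fin Q, ∑ rl : Fin Q, ∑ rl' : Fin Q, ∑ b : Fin t → Fin Q,
                  ∑ r : Fin (n - t - 1) → Fin Q,
                  (ε rl * (starRingEnd ℂ) (ε rl')) * ((if b p = x then (1:ℂ) else 0) *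
                    (U b (cc s r rl)
                      * (starRingEnd ℂ) (U (Function.update b p y) (cc s r rl')))) :=
                Finset.sum_congr rfl fun s _ => sum_comm3 _
            _ = ∑ rl : Fin Q, ∑ rl' : Fin Q, ∑ s : Fin k → Fin Q, ∑ b : Fin t → Fin Q,
                  ∑ r : Fin (n - t - 1) → Fin Q,
                  (ε rl * (starRingEnd ℂ) (ε rl')) * ((if b p = x then (1:ℂ) else 0) *
                    (U b (cc s r rl)
                      * (starRingEnd ℂ) (U (Function.update b p y) (cc s r rl')))) :=
                sum_comm3 _
      _ = ((Q:ℂ)^(t-1))⁻¹ * ∑ rl : Fin Q, ∑ rl' : Fin Q,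
            (ε rl * (starRingEnd ℂ) (ε rl')) *
              ((Q:ℂ)^(t-2) * ((if x = y then (1:ℂ) else 0) * (if rl = rl' then 1 else 0))) := by
          congr 1
          refine Finset.sum_congr rfl fun rl _ => Finset.sum_congr rfl fun rl' _ => ?_
          rw [mul_sum3 (ε rl * (starRingEnd ℂ) (ε rl'))
            (fun s b r => (if b p = x then (1:ℂ) else 0) *
              (U b (cc s r rl) * (starRingEnd ℂ) (U (Function.update b p y) (cc s r rl')))),
            KeyS p x y rl rl']
      _ = ((Q:ℂ))⁻¹ * (if x = y then 1 else 0) := by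
          have hre : ∀ rl rl' : Fin Q,
              (ε rl * (starRingEnd ℂ) (ε rl')) *
                ((Q:ℂ)^(t-2) * ((if x = y then (1:ℂ) else 0) * (if rl = rl' then 1 else 0)))
              = ((Q:ℂ)^(t-2) * (if x = y then (1:ℂ) else 0)) *
                  ((if rl = rl' then (1:ℂ) else 0) * (ε rl * (starRingEnd ℂ) (ε rl'))) := by
            intro rl rl'; ring
          simp only [hre, ← Finset.mul_sum]
          rw [delta_eps ε hε, mul_one]
          rw [show (Q:ℂ)^(t-1) = (Q:ℂ)^(t-2) * Q from by rw [← pow_succ]; congr 1; omega]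
          have hp2 : ((Q:ℂ))^(t-2) ≠ 0 := pow_ne_zero _ hQ0
          by_cases hxy : x = y
          · simp only [if_pos hxy, mul_one]
            field_simp
          · simp [hxy]
  -- ### Part 3 : single qudits outside T are maximally mixed
  have partLast : ∀ p : Fin (n - t - 1),
      rdmLast (fun s (a : Fin t → Fin Q) r => chiState Q t n k h1 h2 U ε s a r) p
        = ((Q:ℂ))⁻¹ • (1 : Matrix (Fin Q) (Fin Q) ℂ) := by
    intro p
    have hp1 : 0 < n - t - 1 := p.pos
    ext x y
    simp only [rdmLast, Matrix.of_apply, Matrix.smul_apply, Matrix.one_apply, smul_eq_mul]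
    have hcond : ∀ (s : Fin k → Fin Q) (r : Fin (n - t - 1) → Fin Q) (rl rl' : Fin Q),
        (if cc s r rl = cc s (Function.update r p y) rl' then (1:ℂ) else 0)
          = (if r p = y then (1:ℂ) else 0) * (if rl = rl' then 1 else 0) := by
      intro s r rl rl'
      by_cases hy : r p = y
      · have hupd : Function.update r p y = r := by
          funext i
          by_cases hi : i = p
          · subst hi; rw [Function.update_self]; exact hy.symm
          · rw [Function.update_of_ne hi]
        rw [hupd, if_pos hy, one_mul]
        by_cases hrr : rl = rl'
        · subst hrr; simp
        · rw [if_neg (fun hc => hrr (hccInj hc).2.2), if_neg hrr]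
      · rw [if_neg hy, zero_mul, if_neg]
        intro hc
        have h5 := (hccInj hc).2.1
        exact hy ((congrFun h5 p).trans (Function.update_self p y r))
    have hinner : ∀ (s : Fin k → Fin Q) (r : Fin (n - t - 1) → Fin Q),
        (∑ b : Fin t → Fin Q, (if r p = x then (1:ℂ) else 0)
            * chiState Q t n k h1 h2 U ε s b r
            * (starRingEnd ℂ) (chiState Q t n k h1 h2 U ε s b (Function.update r p y)))
          = (if r p = x then (1:ℂ) else 0)
              * (((Q:ℂ)^(t-1))⁻¹ * (if r p = y then 1 else 0)) := by
      intro s r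
      calc (∑ b : Fin t → Fin Q, (if r p = x then (1:ℂ) else 0)
              * chiState Q t n k h1 h2 U ε s b r
              * (starRingEnd ℂ) (chiState Q t n k h1 h2 U ε s b (Function.update r p y)))
          = (if r p = x then (1:ℂ) else 0) * ∑ b : Fin t → Fin Q,
              chiState Q t n k h1 h2 U ε s b r
                * (starRingEnd ℂ) (chiState Q t n k h1 h2 U ε s b (Function.update r p y)) := by
            rw [Finset.mul_sum]
            exact Finset.sum_congr rfl fun b _ => mul_assoc _ _ _
        _ = (if r p = x then (1:ℂ) else 0) * (((Q:ℂ)^(t-1))⁻¹ * ∑ b : Fin t → Fin Q,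
              (∑ rl : Fin Q, U b (cc s r rl) * ε rl)
                * (starRingEnd ℂ)
                    (∑ rl' : Fin Q, U b (cc s (Function.update r p y) rl') * ε rl')) := by
            congr 1
            rw [Finset.mul_sum]
            exact Finset.sum_congr rfl fun b _ => hprod s b r s b (Function.update r p y)
        _ = (if r p = x then (1:ℂ) else 0) * (((Q:ℂ)^(t-1))⁻¹ * ∑ rl : Fin Q, ∑ rl' : Fin Q,
              (if cc s r rl = cc s (Function.update r p y) rl' then (1:ℂ) else 0)
                * (ε rl * (starRingEnd ℂ) (ε rl'))) := by
            rw [sum_a U hUuni ε (fun rl => cc s r rl)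
              (fun rl' => cc s (Function.update r p y) rl')]
        _ = (if r p = x then (1:ℂ) else 0)
              * (((Q:ℂ)^(t-1))⁻¹ * (if r p = y then 1 else 0)) := by
            congr 2
            calc (∑ rl : Fin Q, ∑ rl' : Fin Q,
                  (if cc s r rl = cc s (Function.update r p y) rl' then (1:ℂ) else 0)
                    * (ε rl * (starRingEnd ℂ) (ε rl')))
                = ∑ rl : Fin Q, ∑ rl' : Fin Q, (if r p = y then (1:ℂ) else 0)
                    * ((if rl = rl' then (1:ℂ) else 0) * (ε rl * (starRingEnd ℂ) (ε rl'))) := by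
                  refine Finset.sum_congr rfl fun rl _ => Finset.sum_congr rfl fun rl' _ => ?_
                  rw [hcond s r rl rl', mul_assoc]
              _ = (if r p = y then (1:ℂ) else 0) * ∑ rl : Fin Q, ∑ rl' : Fin Q,
                    (if rl = rl' then (1:ℂ) else 0) * (ε rl * (starRingEnd ℂ) (ε rl')) := by
                  simp only [← Finset.mul_sum]
              _ = (if r p = y then (1:ℂ) else 0) := by rw [delta_eps ε hε, mul_one]
    have hxyprod : ∀ r : Fin (n - t - 1) → Fin Q,
        (if r p = x then (1:ℂ) else 0) * (((Q:ℂ)^(t-1))⁻¹ * (if r p = y then 1 else 0))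
          = ((Q:ℂ)^(t-1))⁻¹ * ((if x = y then (1:ℂ) else 0) * (if r p = x then 1 else 0)) := by
      intro r
      by_cases hx : r p = x
      · by_cases hy : r p = y
        · have hxy : x = y := by rw [← hx, hy]
          simp [hx, hy, hxy]
        · have hxy : ¬ x = y := fun h => hy (h ▸ hx)
          simp [hx, hy, hxy]
      · simp [hx]
    calc (∑ s : Fin k → Fin Q, ∑ b : Fin t → Fin Q, ∑ r : Fin (n - t - 1) → Fin Q,
          (if r p = x then (1:ℂ) else 0) * chiState Q t n k h1 h2 U ε s b r
            * (starRingEnd ℂ) (chiState Q t n k h1 h2 U ε s b (Function.update r p y)))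
        = ∑ s : Fin k → Fin Q, ∑ r : Fin (n - t - 1) → Fin Q, ∑ b : Fin t → Fin Q,
            (if r p = x then (1:ℂ) else 0) * chiState Q t n k h1 h2 U ε s b r
              * (starRingEnd ℂ) (chiState Q t n k h1 h2 U ε s b (Function.update r p y)) :=
          Finset.sum_congr rfl fun s _ => Finset.sum_comm
      _ = ∑ s : Fin k → Fin Q, ∑ r : Fin (n - t - 1) → Fin Q,
            ((Q:ℂ)^(t-1))⁻¹ * ((if x = y then (1:ℂ) else 0) * (if r p = x then 1 else 0)) :=
          Finset.sum_congr rfl fun s _ => Finset.sum_congr rfl fun r _ =>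
            (hinner s r).trans (hxyprod r)
      _ = ((Q:ℂ))⁻¹ * (if x = y then 1 else 0) := by
          simp only [← Finset.mul_sum]
          simp only [countEval p x]
          rw [sum_const_fun]
          rw [show (Q:ℂ)^(t-1) = (Q:ℂ)^k * ((Q:ℂ)^(n - t - 1 - 1) * Q) from by
            rw [← pow_succ, ← pow_add]; congr 1; omega]
          have hk0 : ((Q:ℂ))^k ≠ 0 := pow_ne_zero _ hQ0
          have hm0' : ((Q:ℂ))^(n - t - 1 - 1) ≠ 0 := pow_ne_zero _ hQ0
          by_cases hxy : x = y
          · simp only [if_pos hxy, mul_one]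
            field_simp
          · simp [hxy]
  -- ### Conclusion
  exact ⟨part1, fun p => ⟨partMid p, rank_helper hQ0 (partMid p)⟩,
    fun p => ⟨partLast p, rank_helper hQ0 (partLast p)⟩⟩
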